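/- Let ψ be a divergence. For each A ⊆ D, define τ(A) = E[ψ(f(X), f(X^{∖A}))], assuming this expectation is finite and f(X) is integrable. Then τ is a sensitivity map for f with respect to P, i.e.: (i) τ(A) ≥ 0 for every A ⊆ D; (ii) τ(∅) = 0; (iii) for every A ⊆ D, τ(A) = 0 if and only if f(X) = E[f(X) | σ(X_{D∖A})] almost surely. -/

import Mathlib

open MeasureTheory ProbabilityTheory

/-- The σ-algebra `σ(X_{D∖A})` generated by the subvector of `X` indexed by `D ∖ A`. -/
def sigmaRestrict {Ω : Type*} {d : ℕ} (X : Ω → Fin d → ℝ) (A : Finset (Fin d)) :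
    MeasurableSpace Ω :=
  MeasurableSpace.comap (fun ω => (fun i : {i : Fin d // i ∈ Aᶜ} => X ω i)) inferInstance

/-- Proposition 1: for a divergence `ψ`, the map `τ(A) = E[ψ(f(X), f(X^{∖A}))]` is a
sensitivity map for `f` with respect to the law of `X`:
(i) `τ(A) ≥ 0`; (ii) `τ(∅) = 0`; (iii) `τ(A) = 0` iff `f(X) = E[f(X) | σ(X_{D∖A})]` a.s.
Here, for each `A`, `X' A` plays the role of `X^{∖A}`: it agrees with `X` on the
coordinates in `D∖A` almost surely, and `X` and `X' A` are conditionally independent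
and identically distributed given `σ(X_{D∖A})` (expressed by the product formula for
conditional expectations of bounded measurable functions of `X` and `X' A`). -/
theorem stmt0
    {Ω : Type*} [MeasurableSpace Ω] (μ : Measure Ω) [IsProbabilityMeasure μ]
    {d : ℕ} (X : Ω → Fin d → ℝ) (hX : Measurable X)
    (f : (Fin d → ℝ) → ℝ) (hf : Measurable f)
    (ψ : ℝ → ℝ → ℝ) (hψm : Measurable fun q : ℝ × ℝ => ψ q.1 q.2)
    (hψ0 : ∀ x y : ℝ, 0 ≤ ψ x y) (hψeq : ∀ x y : ℝ, ψ x y = 0 ↔ x = y)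
    (X' : Finset (Fin d) → Ω → (Fin d → ℝ))
    (hX' : ∀ A, Measurable (X' A))
    -- (a) `X` and `X' A` are conditionally i.i.d. given `σ(X_{D∖A})`
    (hiid : ∀ (A : Finset (Fin d)) (φ φ' : (Fin d → ℝ) → ℝ),
      Measurable φ → Measurable φ' →
      (∃ C, ∀ x, |φ x| ≤ C) → (∃ C, ∀ x, |φ' x| ≤ C) →
      μ[(fun ω => φ (X ω) * φ' (X' A ω)) | sigmaRestrict X A]
        =ᵐ[μ] fun ω => (μ[(fun ω => φ (X ω)) | sigmaRestrict X A]) ω *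
                        (μ[(fun ω => φ' (X ω)) | sigmaRestrict X A]) ω)
    -- (b) `X' A` agrees with `X` on the coordinates outside `A`, almost surely
    (hfix : ∀ A : Finset (Fin d), ∀ᵐ ω ∂μ, ∀ i ∉ A, X' A ω i = X ω i)
    -- integrability assumptions
    (hint : ∀ A : Finset (Fin d), Integrable (fun ω => ψ (f (X ω)) (f (X' A ω))) μ)
    (hfint : Integrable (fun ω => f (X ω)) μ) :
    (∀ A : Finset (Fin d), 0 ≤ ∫ ω, ψ (f (X ω)) (f (X' A ω)) ∂μ) ∧
    (∫ ω, ψ (f (X ω)) (f (X' (∅ : Finset (Fin d)) ω)) ∂μ = 0) ∧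
    (∀ A : Finset (Fin d),
      ∫ ω, ψ (f (X ω)) (f (X' A ω)) ∂μ = 0 ↔
        (fun ω => f (X ω)) =ᵐ[μ] μ[(fun ω => f (X ω)) | sigmaRestrict X A]) := by
  have hbd_int : ∀ (F : Ω → ℝ) (C : ℝ), Measurable F → (∀ ω, |F ω| ≤ C) → Integrable F μ := by
    intro F C hFm hC
    exact (integrable_const C).mono' hFm.aestronglyMeasurable
      (Filter.Eventually.of_forall fun ω => by simpa [Real.norm_eq_abs] using hC ω)
  refine ⟨fun A => integral_nonneg fun ω => hψ0 _ _, ?_, ?_⟩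
  · have h0 : (fun ω => ψ (f (X ω)) (f (X' ∅ ω))) =ᵐ[μ] 0 := by
      filter_upwards [hfix ∅] with ω hω
      have hXX : X' ∅ ω = X ω := funext fun i => hω i (by simp)
      simp [hXX, (hψeq _ _).2 rfl]
    rw [integral_congr_ae h0]; simp
  intro A
  -- setup
  have hle : sigmaRestrict X A ≤ ‹MeasurableSpace Ω› :=
    measurable_iff_comap_le.mp
      (measurable_pi_lambda _ fun i => (measurable_pi_apply (i : Fin d)).comp hX)
  haveI : SigmaFinite (μ.trim hle) := inferInstance
  set a : (Fin d → ℝ) → ℝ := fun x => Real.arctan (f x) with hadef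
  have ham : Measurable a := Real.measurable_arctan.comp hf
  have hab : ∀ x, |a x| ≤ Real.pi / 2 := fun x =>
    le_of_lt (abs_lt.mpr ⟨Real.neg_pi_div_two_lt_arctan _, Real.arctan_lt_pi_div_two _⟩)
  set Z : Ω → ℝ := fun ω => a (X ω) with hZdef
  set Z' : Ω → ℝ := fun ω => a (X' A ω) with hZ'def
  have hZm : Measurable Z := ham.comp hX
  have hZ'm : Measurable Z' := ham.comp (hX' A)
  have hZint : Integrable Z μ := hbd_int Z _ hZm fun ω => hab _
  have hZ'int : Integrable Z' μ := hbd_int Z' _ hZ'm fun ω => hab _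
  set W : Ω → ℝ := μ[Z | sigmaRestrict X A] with hWdef
  have hWsm : StronglyMeasurable[sigmaRestrict X A] W := stronglyMeasurable_condExp
  have hWint : Integrable W μ := integrable_condExp
  have hWbd : ∀ᵐ ω ∂μ, |W ω| ≤ (Real.pi.toNNReal : ℝ) := by
    refine ae_bdd_condExp_of_ae_bdd (Filter.Eventually.of_forall fun ω => ?_)
    have := hab (X ω)
    have hπ : (Real.pi.toNNReal : ℝ) = Real.pi := Real.coe_toNNReal _ Real.pi_pos.le
    rw [hπ]
    nlinarith [Real.pi_pos]
  have hWWint : Integrable (fun ω => W ω * W ω) μ := by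
    refine (integrable_const ((Real.pi.toNNReal : ℝ) * (Real.pi.toNNReal : ℝ))).mono'
      ((hWsm.mono hle).aestronglyMeasurable.mul (hWsm.mono hle).aestronglyMeasurable) ?_
    filter_upwards [hWbd] with ω hω
    have : |W ω * W ω| ≤ (Real.pi.toNNReal : ℝ) * (Real.pi.toNNReal : ℝ) := by
      rw [abs_mul]
      exact mul_le_mul hω hω (abs_nonneg _) ((abs_nonneg _).trans hω)
    simpa [Real.norm_eq_abs] using this
  -- (K1) product formula
  have hK1 : μ[fun ω => Z ω * Z' ω | sigmaRestrict X A] =ᵐ[μ] fun ω => W ω * W ω :=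
    hiid A a a ham ham ⟨_, hab⟩ ⟨_, hab⟩
  -- (K3) ∫ Z Z' = ∫ W W
  have hK3 : ∫ ω, Z ω * Z' ω ∂μ = ∫ ω, W ω * W ω ∂μ := by
    rw [← integral_condExp hle (f := fun ω => Z ω * Z' ω)]
    exact integral_congr_ae hK1
  -- (K2) ∫ Z'² = ∫ Z²  (equality of laws)
  have hK2 : ∫ ω, Z' ω * Z' ω ∂μ = ∫ ω, Z ω * Z ω ∂μ := by
    set b : (Fin d → ℝ) → ℝ := fun x => a x * a x with hbdef
    have hbm : Measurable b := ham.mul ham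
    have hbb : ∀ x, |b x| ≤ (Real.pi / 2) * (Real.pi / 2) := fun x => by
      rw [hbdef, abs_mul]
      exact mul_le_mul (hab x) (hab x) (abs_nonneg _) ((abs_nonneg _).trans (hab x))
    have h1 : μ[(fun ω => (fun _ : Fin d → ℝ => (1:ℝ)) (X ω) * b (X' A ω)) | sigmaRestrict X A]
        =ᵐ[μ] fun ω => (μ[(fun ω => (fun _ : Fin d → ℝ => (1:ℝ)) (X ω)) | sigmaRestrict X A]) ω *
                        (μ[(fun ω => b (X ω)) | sigmaRestrict X A]) ω :=
      hiid A (fun _ => 1) b measurable_const hbm ⟨1, fun x => by simp⟩ ⟨_, hbb⟩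
    have hc : μ[(fun ω => (fun _ : Fin d → ℝ => (1:ℝ)) (X ω)) | sigmaRestrict X A] = fun _ => (1:ℝ) :=
      condExp_const hle 1
    calc ∫ ω, Z' ω * Z' ω ∂μ
        = ∫ ω, (fun _ : Fin d → ℝ => (1:ℝ)) (X ω) * b (X' A ω) ∂μ := by
          refine integral_congr_ae (Filter.Eventually.of_forall fun ω => ?_)
          simp [hbdef, hZ'def]
      _ = ∫ ω, (μ[(fun ω => (fun _ : Fin d → ℝ => (1:ℝ)) (X ω) * b (X' A ω)) | sigmaRestrict X A]) ω ∂μ :=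
          (integral_condExp hle).symm
      _ = ∫ ω, (μ[(fun ω => (fun _ : Fin d → ℝ => (1:ℝ)) (X ω)) | sigmaRestrict X A]) ω *
                (μ[(fun ω => b (X ω)) | sigmaRestrict X A]) ω ∂μ := integral_congr_ae h1
      _ = ∫ ω, (μ[(fun ω => b (X ω)) | sigmaRestrict X A]) ω ∂μ := by rw [hc]; simp
      _ = ∫ ω, b (X ω) ∂μ := integral_condExp hle
      _ = ∫ ω, Z ω * Z ω ∂μ := by
          refine integral_congr_ae (Filter.Eventually.of_forall fun ω => ?_)
          simp [hbdef, hZdef]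
  have habs : ∀ u v : ℝ, |u| ≤ Real.pi / 2 → |v| ≤ Real.pi / 2 →
      |u * v| ≤ (Real.pi / 2) * (Real.pi / 2) := fun u v hu hv => by
    rw [abs_mul]
    exact mul_le_mul hu hv (abs_nonneg _) ((abs_nonneg _).trans hu)
  have hZZint : Integrable (fun ω => Z ω * Z ω) μ :=
    hbd_int _ ((Real.pi / 2) * (Real.pi / 2)) (hZm.mul hZm) fun ω =>
      habs (Z ω) (Z ω) (hab _) (hab _)
  have hZZ'int : Integrable (fun ω => Z ω * Z' ω) μ :=
    hbd_int _ ((Real.pi / 2) * (Real.pi / 2)) (hZm.mul hZ'm) fun ω =>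
      habs (Z ω) (Z' ω) (hab _) (hab _)
  have hZ'Z'int : Integrable (fun ω => Z' ω * Z' ω) μ :=
    hbd_int _ ((Real.pi / 2) * (Real.pi / 2)) (hZ'm.mul hZ'm) fun ω =>
      habs (Z' ω) (Z' ω) (hab _) (hab _)
  have hZWint : Integrable (fun ω => Z ω * W ω) μ :=
    hWint.bdd_mul (c := Real.pi / 2) hZm.aestronglyMeasurable (Filter.Eventually.of_forall fun ω => by
      simpa [Real.norm_eq_abs] using hab (X ω))
  constructor
  · -- forward: τ(A) = 0 → f(X) = E[f(X)|G] a.e.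
    intro hτ
    have hae0 : (fun ω => ψ (f (X ω)) (f (X' A ω))) =ᵐ[μ] 0 :=
      (integral_eq_zero_iff_of_nonneg (fun ω => hψ0 _ _) (hint A)).mp hτ
    have hfeq : ∀ᵐ ω ∂μ, f (X ω) = f (X' A ω) := by
      filter_upwards [hae0] with ω hω
      exact (hψeq _ _).mp hω
    have hZeqZ' : Z =ᵐ[μ] Z' := by
      filter_upwards [hfeq] with ω hω
      simp [hZdef, hZ'def, hadef, hω]
    -- pull-out : ∫ W Z = ∫ W W
    have hpull : μ[W * Z | sigmaRestrict X A] =ᵐ[μ] W * μ[Z | sigmaRestrict X A] :=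
      condExp_mul_of_stronglyMeasurable_left hWsm
        (by rw [mul_comm]; exact hZWint) hZint
    have hZW : ∫ ω, Z ω * W ω ∂μ = ∫ ω, W ω * W ω ∂μ := by
      have h1 : ∫ ω, Z ω * W ω ∂μ = ∫ ω, (W * Z) ω ∂μ := by
        refine integral_congr_ae (Filter.Eventually.of_forall fun ω => ?_)
        simp [mul_comm]
      rw [h1, ← integral_condExp hle (f := W * Z)]
      refine integral_congr_ae (hpull.mono fun ω hω => ?_)
      simpa [hWdef] using hω
    have hZZ : ∫ ω, Z ω * Z ω ∂μ = ∫ ω, W ω * W ω ∂μ := by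
      have h1 : (fun ω => Z ω * Z ω) =ᵐ[μ] fun ω => Z ω * Z' ω := by
        filter_upwards [hZeqZ'] with ω hω; rw [hω]
      rw [integral_congr_ae h1, hK3]
    -- ∫ (Z - W)² = 0
    have hsub_int : Integrable (fun ω => (Z ω - W ω) ^ 2) μ := by
      have : (fun ω => (Z ω - W ω) ^ 2)
          = fun ω => Z ω * Z ω - 2 * (Z ω * W ω) + W ω * W ω := by
        funext ω; ring
      rw [this]
      exact (hZZint.sub (hZWint.const_mul 2)).add hWWint
    have hsq0 : ∫ ω, (Z ω - W ω) ^ 2 ∂μ = 0 := by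
      have hI2 : Integrable (fun ω => 2 * (Z ω * W ω)) μ := hZWint.const_mul 2
      have hI12 : Integrable (fun ω => Z ω * Z ω - 2 * (Z ω * W ω)) μ := hZZint.sub hI2
      have h1 : ∫ ω, (Z ω - W ω) ^ 2 ∂μ
          = ∫ ω, (Z ω * Z ω - 2 * (Z ω * W ω) + W ω * W ω) ∂μ := by
        refine integral_congr_ae (Filter.Eventually.of_forall fun ω => ?_); ring
      have h2 : ∫ ω, (Z ω * Z ω - 2 * (Z ω * W ω) + W ω * W ω) ∂μ
          = (∫ ω, (Z ω * Z ω - 2 * (Z ω * W ω)) ∂μ) + ∫ ω, W ω * W ω ∂μ :=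
        integral_add hI12 hWWint
      have h3 : ∫ ω, (Z ω * Z ω - 2 * (Z ω * W ω)) ∂μ
          = (∫ ω, Z ω * Z ω ∂μ) - ∫ ω, 2 * (Z ω * W ω) ∂μ := integral_sub hZZint hI2
      have h4 : ∫ ω, 2 * (Z ω * W ω) ∂μ = 2 * ∫ ω, Z ω * W ω ∂μ := integral_const_mul 2 _
      rw [h1, h2, h3, h4, hZZ, hZW]; ring
    have hZeqW : Z =ᵐ[μ] W := by
      have := (integral_eq_zero_iff_of_nonneg (fun ω => sq_nonneg _) hsub_int).mp hsq0
      filter_upwards [this] with ω hω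
      have : (Z ω - W ω) ^ 2 = 0 := hω
      have := pow_eq_zero_iff (n := 2) (by norm_num) |>.mp this
      linarith [sub_eq_zero.mp this]
    -- conclude
    have htan : Measurable Real.tan := by
      have h : Real.tan = fun x => Real.sin x / Real.cos x :=
        funext fun x => Real.tan_eq_sin_div_cos x
      rw [h]; exact Real.measurable_sin.div Real.measurable_cos
    set g : Ω → ℝ := fun ω => Real.tan (W ω) with hgdef
    have hgsm : StronglyMeasurable[sigmaRestrict X A] g :=
      (htan.comp hWsm.measurable).stronglyMeasurable
    have hfg : (fun ω => f (X ω)) =ᵐ[μ] g := by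
      filter_upwards [hZeqW] with ω hω
      have h2 : Real.tan (Z ω) = f (X ω) := Real.tan_arctan _
      show f (X ω) = Real.tan (W ω)
      rw [← hω, h2]
    have hgint : Integrable g μ := hfint.congr hfg
    calc (fun ω => f (X ω)) =ᵐ[μ] g := hfg
      _ = μ[g | sigmaRestrict X A] := (condExp_of_stronglyMeasurable hle hgsm hgint).symm
      _ =ᵐ[μ] μ[(fun ω => f (X ω)) | sigmaRestrict X A] := condExp_congr_ae hfg.symm
  · -- reverse: f(X) = E[f(X)|G] a.e. → τ(A) = 0
    intro hW0
    set W0 : Ω → ℝ := μ[(fun ω => f (X ω)) | sigmaRestrict X A] with hW0def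
    set V : Ω → ℝ := fun ω => Real.arctan (W0 ω) with hVdef
    have hVsm : StronglyMeasurable[sigmaRestrict X A] V :=
      (Real.measurable_arctan.comp stronglyMeasurable_condExp.measurable).stronglyMeasurable
    have hVint : Integrable V μ := by
      refine hbd_int V (Real.pi / 2) (Real.measurable_arctan.comp
        (stronglyMeasurable_condExp.mono hle).measurable) fun ω => ?_
      exact le_of_lt (abs_lt.mpr ⟨Real.neg_pi_div_two_lt_arctan _, Real.arctan_lt_pi_div_two _⟩)
    have hZV : Z =ᵐ[μ] V := by
      filter_upwards [hW0] with ω hω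
      simp [hZdef, hVdef, hadef, hω, hW0def]
    have hWZ : W =ᵐ[μ] Z := by
      calc W =ᵐ[μ] μ[V | sigmaRestrict X A] := condExp_congr_ae hZV
        _ = V := condExp_of_stronglyMeasurable hle hVsm hVint
        _ =ᵐ[μ] Z := hZV.symm
    have hZZ' : ∫ ω, Z ω * Z' ω ∂μ = ∫ ω, Z ω * Z ω ∂μ := by
      rw [hK3]
      refine integral_congr_ae ?_
      filter_upwards [hWZ] with ω hω; rw [hω]
    have hsub_int : Integrable (fun ω => (Z ω - Z' ω) ^ 2) μ := by
      have : (fun ω => (Z ω - Z' ω) ^ 2)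
          = fun ω => Z ω * Z ω - 2 * (Z ω * Z' ω) + Z' ω * Z' ω := by
        funext ω; ring
      rw [this]
      exact (hZZint.sub (hZZ'int.const_mul 2)).add hZ'Z'int
    have hsq0 : ∫ ω, (Z ω - Z' ω) ^ 2 ∂μ = 0 := by
      have hI2 : Integrable (fun ω => 2 * (Z ω * Z' ω)) μ := hZZ'int.const_mul 2
      have hI12 : Integrable (fun ω => Z ω * Z ω - 2 * (Z ω * Z' ω)) μ := hZZint.sub hI2
      have h1 : ∫ ω, (Z ω - Z' ω) ^ 2 ∂μ
          = ∫ ω, (Z ω * Z ω - 2 * (Z ω * Z' ω) + Z' ω * Z' ω) ∂μ := by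
        refine integral_congr_ae (Filter.Eventually.of_forall fun ω => ?_); ring
      have h2 : ∫ ω, (Z ω * Z ω - 2 * (Z ω * Z' ω) + Z' ω * Z' ω) ∂μ
          = (∫ ω, (Z ω * Z ω - 2 * (Z ω * Z' ω)) ∂μ) + ∫ ω, Z' ω * Z' ω ∂μ :=
        integral_add hI12 hZ'Z'int
      have h3 : ∫ ω, (Z ω * Z ω - 2 * (Z ω * Z' ω)) ∂μ
          = (∫ ω, Z ω * Z ω ∂μ) - ∫ ω, 2 * (Z ω * Z' ω) ∂μ := integral_sub hZZint hI2
      have h4 : ∫ ω, 2 * (Z ω * Z' ω) ∂μ = 2 * ∫ ω, Z ω * Z' ω ∂μ := integral_const_mul 2 _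
      rw [h1, h2, h3, h4, hZZ', hK2]; ring
    have hZeqZ' : Z =ᵐ[μ] Z' := by
      have := (integral_eq_zero_iff_of_nonneg (fun ω => sq_nonneg _) hsub_int).mp hsq0
      filter_upwards [this] with ω hω
      have : (Z ω - Z' ω) ^ 2 = 0 := hω
      have := pow_eq_zero_iff (n := 2) (by norm_num) |>.mp this
      linarith [sub_eq_zero.mp this]
    have hψ0' : (fun ω => ψ (f (X ω)) (f (X' A ω))) =ᵐ[μ] 0 := by
      filter_upwards [hZeqZ'] with ω hω
      have h1 : f (X ω) = f (X' A ω) := by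
        have h2 : Real.tan (Z ω) = f (X ω) := Real.tan_arctan _
        have h3 : Real.tan (Z' ω) = f (X' A ω) := Real.tan_arctan _
        rw [← h2, ← h3, hω]
      simp [(hψeq _ _).2 h1]
    rw [integral_congr_ae hψ0']; simp
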